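/- arXiv:1511.09102 — 7 statements merged into one kernel-verified Lean document; each statement's English description precedes it below -/
import Mathlib

section
/- For 0 < q < 1, 0 < z < 1, and n ≥ 1, we have I_{n-1}(q;z) · I_{n+1}(q;z) < (I_n(q;z))^2, where I_n(q;z) = Σ_{k=n+1}^∞ z^k/(q;q)_k is the remainder of the q-exponential series e(q;z). -/
open Finset Filter Topology

noncomputable def qPoch (q : ℝ) (m : ℕ) : ℝ := ∏ j ∈ Finset.range m, (1 - q ^ (j + 1))

/-- Tail of the q-exponential e(q;z) starting at index m; I_n(q;z) = qexpTail q z (n+1). -/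
noncomputable def qexpTail (q z : ℝ) (m : ℕ) : ℝ := ∑' k : ℕ, z ^ (m + k) / qPoch q (m + k)

lemma qPoch_pos {q : ℝ} (hq0 : 0 < q) (hq1 : q < 1) (m : ℕ) : 0 < qPoch q m :=
  Finset.prod_pos fun j _ => by
    have h : q ^ (j + 1) < 1 := pow_lt_one₀ hq0.le hq1 (Nat.succ_ne_zero j)
    linarith

lemma qterm_pos {q z : ℝ} (hq0 : 0 < q) (hq1 : q < 1) (hz0 : 0 < z) (k : ℕ) :
    0 < z ^ k / qPoch q k := div_pos (pow_pos hz0 k) (qPoch_pos hq0 hq1 k)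

lemma one_sub_pow_pos {q : ℝ} (hq0 : 0 < q) (hq1 : q < 1) (k : ℕ) :
    (0 : ℝ) < 1 - q ^ (k + 1) := by
  have : q ^ (k + 1) < 1 := pow_lt_one₀ hq0.le hq1 (Nat.succ_ne_zero k)
  linarith

lemma qterm_succ {q z : ℝ} (hq0 : 0 < q) (hq1 : q < 1) (k : ℕ) :
    z ^ (k + 1) / qPoch q (k + 1) = (z ^ k / qPoch q k) * (z / (1 - q ^ (k + 1))) := by
  have h1 := one_sub_pow_pos hq0 hq1 k
  have hP := qPoch_pos hq0 hq1 k
  rw [qPoch, Finset.prod_range_succ, ← qPoch]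
  field_simp
  ring

lemma qterm_summable {q z : ℝ} (hq0 : 0 < q) (hq1 : q < 1) (hz0 : 0 < z) (hz1 : z < 1) :
    Summable (fun k => z ^ k / qPoch q k) := by
  apply summable_of_ratio_norm_eventually_le (r := (1 + z) / 2) (by linarith)
  have h0 : Tendsto (fun k : ℕ => q ^ (k + 1)) atTop (nhds 0) := by
    have := tendsto_pow_atTop_nhds_zero_of_lt_one hq0.le hq1
    exact this.comp (tendsto_add_atTop_nat 1)
  have hc : (0 : ℝ) < ((1 + z) / 2 - z) / ((1 + z) / 2) := by
    apply div_pos <;> linarith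
  filter_upwards [h0.eventually_lt_const hc] with k hk
  have h1 := one_sub_pow_pos hq0 hq1 k
  have hr : z / (1 - q ^ (k + 1)) ≤ (1 + z) / 2 := by
    rw [div_le_iff₀ h1]
    rw [lt_div_iff₀ (by linarith : (0:ℝ) < (1 + z) / 2)] at hk
    nlinarith
  have hk1 := (qterm_pos hq0 hq1 hz0 k).le
  rw [qterm_succ hq0 hq1 k, Real.norm_eq_abs, Real.norm_eq_abs,
    abs_of_nonneg hk1, abs_of_nonneg (by positivity)]
  calc z ^ k / qPoch q k * (z / (1 - q ^ (k + 1)))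
      ≤ z ^ k / qPoch q k * ((1 + z) / 2) := by
        exact mul_le_mul_of_nonneg_left hr hk1
    _ = (1 + z) / 2 * (z ^ k / qPoch q k) := by ring

theorem turan_right_I (q z : ℝ) (n : ℕ) (hq0 : 0 < q) (hq1 : q < 1)
    (hz0 : 0 < z) (hz1 : z < 1) (hn : 1 ≤ n) :
    qexpTail q z n * qexpTail q z (n + 2) < (qexpTail q z (n + 1)) ^ 2 := by
  set a : ℕ → ℝ := fun k => z ^ k / qPoch q k with ha
  have hapos : ∀ k, 0 < a k := qterm_pos hq0 hq1 hz0
  have hsum : Summable a := qterm_summable hq0 hq1 hz0 hz1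
  have hsum' : ∀ m, Summable (fun k => a (m + k)) := fun m => by
    have := (summable_nat_add_iff m).mpr hsum
    exact this.congr fun k => by rw [Nat.add_comm]
  have hTdef : ∀ m, qexpTail q z m = ∑' k, a (m + k) := fun m => rfl
  have hT : ∀ m, qexpTail q z m = a m + qexpTail q z (m + 1) := by
    intro m
    rw [hTdef m, hTdef (m + 1), Summable.tsum_eq_zero_add (hsum' m)]
    simp only [Nat.add_zero]
    congr 1
    exact tsum_congr fun k => by rw [show m + (k + 1) = m + 1 + k by omega]
  have hTnonneg : ∀ m, 0 ≤ qexpTail q z m := fun m => by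
    rw [hTdef m]; exact tsum_nonneg fun k => (hapos _).le
  -- key inequality: (a n - a (n+1)) * T(n+1) < a n * a (n+1)
  have hkey : (a n - a (n + 1)) * qexpTail q z (n + 1) < a n * a (n + 1) := by
    by_cases hc : z < 1 - q ^ (n + 1)
    · -- hard case
      set t : ℝ := 1 - q ^ (n + 1) with ht
      set s : ℝ := 1 - q ^ (n + 2) with hs
      have ht0 : 0 < t := one_sub_pow_pos hq0 hq1 n
      have hts : t < s := by
        have : q ^ (n + 2) < q ^ (n + 1) := by
          apply pow_lt_pow_right_of_lt_one₀ hq0 hq1; omega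
        rw [ht, hs]; linarith
      have hzs : z < s := lt_trans hc hts
      have hs0 : (0:ℝ) < s := lt_trans hz0 hzs
      have hr0 : 0 ≤ z / s := div_nonneg hz0.le hs0.le
      have hr1 : z / s < 1 := (div_lt_one (by linarith)).mpr hzs
      -- pointwise geometric bound
      have hpt : ∀ j, a (n + 1 + j) ≤ a (n + 1) * (z / s) ^ j := by
        intro j
        induction j with
        | zero => simp
        | succ j ih =>
          have heq : a (n + 1 + (j + 1)) = a (n + 1 + j) * (z / (1 - q ^ (n + 1 + j + 1))) := by
            rw [show n + 1 + (j + 1) = (n + 1 + j) + 1 by omega]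
            exact qterm_succ hq0 hq1 (n + 1 + j)
          have h1 := one_sub_pow_pos hq0 hq1 (n + 1 + j)
          have hle : z / (1 - q ^ (n + 1 + j + 1)) ≤ z / s := by
            apply div_le_div_of_nonneg_left hz0.le (by linarith)
            have : q ^ (n + 1 + j + 1) ≤ q ^ (n + 2) :=
              pow_le_pow_of_le_one hq0.le hq1.le (by omega)
            rw [hs]; linarith
          calc a (n + 1 + (j + 1)) = a (n + 1 + j) * (z / (1 - q ^ (n + 1 + j + 1))) := heq
            _ ≤ (a (n + 1) * (z / s) ^ j) * (z / s) :=
                mul_le_mul ih hle (div_nonneg hz0.le h1.le)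
                  (mul_nonneg (hapos _).le (pow_nonneg hr0 j))
            _ = a (n + 1) * (z / s) ^ (j + 1) := by ring
      have hgeo : Summable (fun j : ℕ => a (n + 1) * (z / s) ^ j) :=
        (summable_geometric_of_lt_one hr0 hr1).mul_left _
      have hbound : qexpTail q z (n + 1) ≤ a (n + 1) * (s / (s - z)) := by
        rw [hTdef (n + 1)]
        calc (∑' j, a (n + 1 + j)) ≤ ∑' j, a (n + 1) * (z / s) ^ j :=
              Summable.tsum_le_tsum hpt (hsum' (n + 1)) hgeo
          _ = a (n + 1) * (1 - z / s)⁻¹ := by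
              rw [tsum_mul_left, tsum_geometric_of_lt_one hr0 hr1]
          _ = a (n + 1) * (s / (s - z)) := by
              congr 1
              have hsne : s ≠ 0 := ne_of_gt hs0
              rw [show (1 : ℝ) - z / s = (s - z) / s by field_simp, inv_div]
      have hdiff : a n - a (n + 1) = a n * ((t - z) / t) := by
        have hstep : a (n + 1) = a n * (z / t) := by
          rw [ht]; exact qterm_succ hq0 hq1 n
        have htne : t ≠ 0 := ne_of_gt ht0
        rw [hstep]
        field_simp
      have hfrac : (t - z) / t * (s / (s - z)) < 1 := by
        rw [div_mul_div_comm, div_lt_one (mul_pos ht0 (by linarith))]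
        nlinarith
      calc (a n - a (n + 1)) * qexpTail q z (n + 1)
          = a n * ((t - z) / t) * qexpTail q z (n + 1) := by rw [hdiff]
        _ ≤ a n * ((t - z) / t) * (a (n + 1) * (s / (s - z))) := by
            apply mul_le_mul_of_nonneg_left hbound
            exact mul_nonneg (hapos n).le (div_nonneg (by linarith) ht0.le)
        _ = (a n * a (n + 1)) * ((t - z) / t * (s / (s - z))) := by ring
        _ < (a n * a (n + 1)) * 1 := by
            apply mul_lt_mul_of_pos_left hfrac
            exact mul_pos (hapos n) (hapos (n + 1))
        _ = a n * a (n + 1) := by ring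
    · -- easy case : a (n+1) ≥ a n
      push_neg at hc
      have h1 := one_sub_pow_pos hq0 hq1 n
      have hge : a n ≤ a (n + 1) := by
        have heq : a (n + 1) = a n * (z / (1 - q ^ (n + 1))) := qterm_succ hq0 hq1 n
        have : 1 ≤ z / (1 - q ^ (n + 1)) := (one_le_div h1).mpr (by linarith)
        nlinarith [hapos n]
      have : (a n - a (n + 1)) * qexpTail q z (n + 1) ≤ 0 :=
        mul_nonpos_of_nonpos_of_nonneg (by linarith) (hTnonneg (n + 1))
      calc (a n - a (n + 1)) * qexpTail q z (n + 1) ≤ 0 := this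
        _ < a n * a (n + 1) := mul_pos (hapos n) (hapos (n + 1))
  -- assemble
  have e1 : qexpTail q z n = a n + qexpTail q z (n + 1) := hT n
  have e2 : qexpTail q z (n + 1) = a (n + 1) + qexpTail q z (n + 2) := hT (n + 1)
  nlinarith [hkey, hTnonneg (n + 1), hapos n, hapos (n + 1)]
end

section
/- For 0 < q < 1, z > 0, and n ≥ 1, we have J_{n-1}(q;z) · J_{n+1}(q;z) < (J_n(q;z))^2, where J_n(q;z) = Σ_{k=n+1}^∞ q^{k(k-1)/2} z^k/(q;q)_k is the remainder of the q-exponential function E(q;z). -/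
open Finset Filter Topology

/-- Tail of the q-exponential E(q;z) starting at index m; J_n(q;z) = qExpTail q z (n+1). -/
noncomputable def qExpTail (q z : ℝ) (m : ℕ) : ℝ :=
  ∑' k : ℕ, q ^ ((m + k) * (m + k - 1) / 2) * z ^ (m + k) / qPoch q (m + k)

namespace TuranAux

/-- The k-th term of the series E(q;z). -/
noncomputable def a (q z : ℝ) (k : ℕ) : ℝ := q ^ (k * (k - 1) / 2) * z ^ k / qPoch q k

variable {q z : ℝ}

lemma qPoch_pos (hq0 : 0 < q) (hq1 : q < 1) (m : ℕ) : 0 < qPoch q m := by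
  apply Finset.prod_pos
  intro j _
  have : q ^ (j + 1) < 1 := pow_lt_one₀ hq0.le hq1 (Nat.succ_ne_zero j)
  linarith

lemma a_pos (hq0 : 0 < q) (hq1 : q < 1) (hz : 0 < z) (k : ℕ) : 0 < a q z k :=
  div_pos (mul_pos (pow_pos hq0 _) (pow_pos hz _)) (qPoch_pos hq0 hq1 k)

lemma one_sub_pow_pos (hq0 : 0 < q) (hq1 : q < 1) (m : ℕ) : 0 < 1 - q ^ (m + 1) := by
  have : q ^ (m + 1) < 1 := pow_lt_one₀ hq0.le hq1 (Nat.succ_ne_zero m)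
  linarith

lemma a_succ (hq0 : 0 < q) (hq1 : q < 1) (m : ℕ) :
    a q z (m + 1) = a q z m * (q ^ m * z / (1 - q ^ (m + 1))) := by
  have h1 : (m + 1) * (m + 1 - 1) / 2 = m * (m - 1) / 2 + m := by
    simpa using Nat.triangle_succ m
  have h2 : qPoch q (m + 1) = qPoch q m * (1 - q ^ (m + 1)) := by
    simp [qPoch, Finset.prod_range_succ]
  have hP := (qPoch_pos hq0 hq1 m).ne'
  have hQ := (one_sub_pow_pos hq0 hq1 m).ne'
  simp only [a, h1, h2, pow_add, pow_succ]
  field_simp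

/-- The ratio a_{j+1}/a_j is strictly decreasing. -/
lemma rho_lt (hq0 : 0 < q) (hq1 : q < 1) (hz : 0 < z) {m j : ℕ} (hmj : m < j) :
    q ^ j * z / (1 - q ^ (j + 1)) < q ^ m * z / (1 - q ^ (m + 1)) := by
  have hdj := one_sub_pow_pos hq0 hq1 j
  have hdm := one_sub_pow_pos hq0 hq1 m
  rw [div_lt_div_iff₀ hdj hdm]
  have hcross : q ^ j * q ^ (m + 1) = q ^ m * q ^ (j + 1) := by
    rw [← pow_add, ← pow_add]; congr 1; omega
  have hnum : q ^ j < q ^ m := pow_lt_pow_right_of_lt_one₀ hq0 hq1 hmj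
  nlinarith [mul_pos hq0 hz]

lemma summable_a (hq0 : 0 < q) (hq1 : q < 1) (hz : 0 < z) : Summable (a q z) := by
  have hε : 0 < (1 - q) / (2 * z) := div_pos (by linarith) (by linarith)
  have hev : ∀ᶠ k in atTop, q ^ k < (1 - q) / (2 * z) :=
    (tendsto_pow_atTop_nhds_zero_of_lt_one hq0.le hq1).eventually (gt_mem_nhds hε)
  apply summable_of_ratio_norm_eventually_le (r := 1 / 2) (by norm_num)
  filter_upwards [hev] with k hk
  have hak := a_pos hq0 hq1 hz k
  have hak1 := a_pos hq0 hq1 hz (k + 1)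
  rw [Real.norm_eq_abs, Real.norm_eq_abs, abs_of_pos hak1, abs_of_pos hak,
    a_succ hq0 hq1 k]
  have hd := one_sub_pow_pos hq0 hq1 k
  have hqk : q ^ (k + 1) ≤ q := pow_le_of_le_one hq0.le hq1.le (Nat.succ_ne_zero k)
  have hratio : q ^ k * z / (1 - q ^ (k + 1)) ≤ 1 / 2 := by
    rw [div_le_div_iff₀ hd (by norm_num)]
    have : q ^ k * z < (1 - q) / 2 := by
      rw [lt_div_iff₀ (by positivity : (0:ℝ) < 2 * z)] at hk
      nlinarith
    nlinarith
  nlinarith [mul_le_mul_of_nonneg_left hratio hak.le]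

lemma summable_shift (hq0 : 0 < q) (hq1 : q < 1) (hz : 0 < z) (m : ℕ) :
    Summable (fun k => a q z (m + k)) := by
  have := (summable_nat_add_iff (f := a q z) m).2 (summable_a hq0 hq1 hz)
  simpa [add_comm m] using this

lemma qExpTail_eq (m : ℕ) : qExpTail q z m = ∑' k : ℕ, a q z (m + k) := rfl

lemma qExpTail_rec (hq0 : 0 < q) (hq1 : q < 1) (hz : 0 < z) (m : ℕ) :
    qExpTail q z m = a q z m + qExpTail q z (m + 1) := by
  rw [qExpTail_eq, qExpTail_eq, Summable.tsum_eq_zero_add (summable_shift hq0 hq1 hz m)]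
  simp only [Nat.add_zero]
  congr 1
  exact tsum_congr fun k => by congr 1; omega

lemma qExpTail_pos (hq0 : 0 < q) (hq1 : q < 1) (hz : 0 < z) (m : ℕ) :
    0 < qExpTail q z m := by
  rw [qExpTail_eq]
  exact Summable.tsum_pos (summable_shift hq0 hq1 hz m)
    (fun k => (a_pos hq0 hq1 hz _).le) 0 (a_pos hq0 hq1 hz _)

lemma key (hq0 : 0 < q) (hq1 : q < 1) (hz : 0 < z) (n : ℕ) :
    a q z n * qExpTail q z (n + 2) < a q z (n + 1) * qExpTail q z (n + 1) := by
  rw [qExpTail_eq, qExpTail_eq, ← tsum_mul_left, ← tsum_mul_left]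
  have hterm : ∀ k : ℕ, a q z n * a q z (n + 2 + k) < a q z (n + 1) * a q z (n + 1 + k) := by
    intro k
    have hrw : a q z (n + 2 + k) = a q z (n + 1 + k) * (q ^ (n + 1 + k) * z / (1 - q ^ (n + 1 + k + 1))) := by
      rw [show n + 2 + k = (n + 1 + k) + 1 by omega, a_succ hq0 hq1]
    rw [hrw, a_succ hq0 hq1 n]
    have hρ : q ^ (n + 1 + k) * z / (1 - q ^ (n + 1 + k + 1)) < q ^ n * z / (1 - q ^ (n + 1)) :=
      rho_lt hq0 hq1 hz (by omega)
    have h1 := a_pos hq0 hq1 hz n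
    have h2 := a_pos hq0 hq1 hz (n + 1 + k)
    calc a q z n * (a q z (n + 1 + k) * (q ^ (n + 1 + k) * z / (1 - q ^ (n + 1 + k + 1))))
        < a q z n * (a q z (n + 1 + k) * (q ^ n * z / (1 - q ^ (n + 1)))) := by
          apply mul_lt_mul_of_pos_left _ h1
          exact mul_lt_mul_of_pos_left hρ h2
      _ = a q z n * (q ^ n * z / (1 - q ^ (n + 1))) * a q z (n + 1 + k) := by ring
  refine Summable.tsum_lt_tsum (fun k => (hterm k).le) (hterm 0)
    (((summable_shift hq0 hq1 hz (n + 2)).mul_left _))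
    (((summable_shift hq0 hq1 hz (n + 1)).mul_left _))

end TuranAux

theorem turan_right_J (q z : ℝ) (n : ℕ) (hq0 : 0 < q) (hq1 : q < 1)
    (hz : 0 < z) (hn : 1 ≤ n) :
    qExpTail q z n * qExpTail q z (n + 2) < (qExpTail q z (n + 1)) ^ 2 := by
  have hrec1 := TuranAux.qExpTail_rec (q := q) (z := z) hq0 hq1 hz n
  have hrec2 := TuranAux.qExpTail_rec (q := q) (z := z) hq0 hq1 hz (n + 1)
  have hkey := TuranAux.key (q := q) (z := z) hq0 hq1 hz n
  have h2 : n + 1 + 1 = n + 2 := rfl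
  rw [h2] at hrec2
  have hpos2 := TuranAux.qExpTail_pos (q := q) (z := z) hq0 hq1 hz (n + 2)
  have hapos := TuranAux.a_pos (q := q) (z := z) hq0 hq1 hz n
  calc qExpTail q z n * qExpTail q z (n + 2)
      = TuranAux.a q z n * qExpTail q z (n + 2)
        + qExpTail q z (n + 1) * qExpTail q z (n + 2) := by rw [hrec1]; ring
    _ < TuranAux.a q z (n + 1) * qExpTail q z (n + 1)
        + qExpTail q z (n + 1) * qExpTail q z (n + 2) := by linarith
    _ = qExpTail q z (n + 1) * (TuranAux.a q z (n + 1) + qExpTail q z (n + 2)) := by ring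
    _ = (qExpTail q z (n + 1)) ^ 2 := by rw [← hrec2]; ring
end

section
/- For 0 < q < 1, z > 0, and n ≥ 1, we have (q - q^{n+2})/(1 - q^{n+2}) · (J_n(q;z))^2 ≤ J_{n-1}(q;z) · J_{n+1}(q;z), where J_n(q;z) = Σ_{k=n+1}^∞ q^{k(k-1)/2} z^k/(q;q)_k. -/
open Finset Filter Topology

noncomputable def aJ (q z : ℝ) (m : ℕ) : ℝ := q ^ (m * (m - 1) / 2) * z ^ m / qPoch q m

lemma aJ_pos {q z : ℝ} (hq0 : 0 < q) (hq1 : q < 1) (hz : 0 < z) (m : ℕ) : 0 < aJ q z m :=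
  div_pos (mul_pos (pow_pos hq0 _) (pow_pos hz _)) (qPoch_pos hq0 hq1 m)

lemma qPoch_succ (q : ℝ) (m : ℕ) : qPoch q (m + 1) = qPoch q m * (1 - q ^ (m + 1)) :=
  Finset.prod_range_succ _ _

lemma exp_succ (m : ℕ) : (m + 1) * (m + 1 - 1) / 2 = m * (m - 1) / 2 + m := by
  rw [← Nat.choose_two_right, ← Nat.choose_two_right, Nat.choose_succ_succ m 1]
  simp [Nat.choose_one_right, Nat.add_comm]

lemma aJ_succ {q z : ℝ} (hq0 : 0 < q) (hq1 : q < 1) (m : ℕ) :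
    aJ q z (m + 1) = aJ q z m * (q ^ m * z / (1 - q ^ (m + 1))) := by
  have h1 : (0:ℝ) < 1 - q ^ (m + 1) := by
    have : q ^ (m + 1) < 1 := pow_lt_one₀ hq0.le hq1 (Nat.succ_ne_zero m)
    linarith
  have h2 := (qPoch_pos hq0 hq1 m).ne'
  unfold aJ
  rw [qPoch_succ, exp_succ, pow_add, pow_succ]
  field_simp

lemma key_step {q z : ℝ} (hq0 : 0 < q) (hq1 : q < 1) (hz : 0 < z) (n k : ℕ) :
    (q - q ^ (n + 2)) / (1 - q ^ (n + 2)) * aJ q z (n + 1 + k) ^ 2 ≤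
      aJ q z (n + k) * aJ q z (n + 2 + k) := by
  have hpow : ∀ j : ℕ, (0:ℝ) < 1 - q ^ (j + 1) := by
    intro j
    have : q ^ (j + 1) < 1 := pow_lt_one₀ hq0.le hq1 (Nat.succ_ne_zero j)
    linarith
  have hY : (0:ℝ) < 1 - q ^ (n + 2) := by simpa using hpow (n + 1)
  have hD1 : (0:ℝ) < 1 - q ^ (n + k + 1) := hpow (n + k)
  have hD2 : (0:ℝ) < 1 - q ^ (n + k + 2) := hpow (n + k + 1)
  have hu : (0:ℝ) < q ^ (n + 1) := pow_pos hq0 _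
  have hv : q ^ k ≤ 1 := pow_le_one₀ hq0.le hq1.le
  have eA : q ^ (n + k + 1) = q ^ (n + 1) * q ^ k := by rw [← pow_add]; congr 1; omega
  have eB : q ^ (n + k + 2) = q ^ (n + 1) * q ^ k * q := by
    rw [mul_assoc, ← pow_succ, ← pow_add]; congr 1; omega
  have eC : q ^ (n + 2) = q ^ (n + 1) * q := by rw [← pow_succ]
  have step1 : (q - q ^ (n + 2)) * (1 - q ^ (n + k + 2)) ≤
      q * (1 - q ^ (n + k + 1)) * (1 - q ^ (n + 2)) := by
    rw [eA, eB, eC]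
    nlinarith [mul_nonneg (mul_nonneg (mul_pos hq0 hu).le (sub_nonneg.2 hv))
      (sub_nonneg.2 hq1.le)]
  -- step2 : c * r1 ≤ r2
  set r1 : ℝ := q ^ (n + k) * z / (1 - q ^ (n + k + 1)) with hr1def
  set r2 : ℝ := q ^ (n + 1 + k) * z / (1 - q ^ (n + k + 2)) with hr2def
  have hr1pos : 0 < r1 := div_pos (by positivity) hD1
  have hr2pos : 0 < r2 := div_pos (by positivity) hD2
  have eD : q ^ (n + 1 + k) = q * q ^ (n + k) := by rw [← pow_succ']; congr 1; omega
  have step2 : (q - q ^ (n + 2)) / (1 - q ^ (n + 2)) * r1 ≤ r2 := by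
    rw [hr1def, hr2def, div_mul_div_comm, div_le_div_iff₀ (mul_pos hY hD1) hD2, eD]
    nlinarith [mul_le_mul_of_nonneg_right step1
      (show (0:ℝ) ≤ q ^ (n + k) * z by positivity)]
  have h1 : aJ q z (n + 1 + k) = aJ q z (n + k) * r1 := by
    rw [show n + 1 + k = (n + k) + 1 by omega, aJ_succ hq0 hq1]
  have h2 : aJ q z (n + 2 + k) = aJ q z (n + 1 + k) * r2 := by
    rw [show n + 2 + k = (n + 1 + k) + 1 by omega, aJ_succ hq0 hq1, hr2def,
      show n + 1 + k + 1 = n + k + 2 by omega]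
  have hA : 0 < aJ q z (n + k) := aJ_pos hq0 hq1 hz _
  rw [h1, h2, h1]
  nlinarith [mul_le_mul_of_nonneg_right step2
    (show (0:ℝ) ≤ aJ q z (n + k) * aJ q z (n + k) * r1 by positivity)]


lemma aJ_summable {q z : ℝ} (hq0 : 0 < q) (hq1 : q < 1) (hz : 0 < z) : Summable (aJ q z) := by
  have hq1' : (0:ℝ) < 1 - q := by linarith
  refine summable_of_ratio_norm_eventually_le (by norm_num : (1:ℝ)/2 < 1) ?_
  have h0 : Tendsto (fun m : ℕ => q ^ m * (z / (1 - q))) atTop (𝓝 0) := by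
    simpa using (tendsto_pow_atTop_nhds_zero_of_lt_one hq0.le hq1).mul_const (z / (1 - q))
  filter_upwards [h0.eventually_le_const (by norm_num : (0:ℝ) < 1/2)] with m hm
  have hp := aJ_pos hq0 hq1 hz
  have hD : (0:ℝ) < 1 - q ^ (m + 1) := by
    have : q ^ (m + 1) < 1 := pow_lt_one₀ hq0.le hq1 (Nat.succ_ne_zero m)
    linarith
  rw [Real.norm_of_nonneg (hp (m+1)).le, Real.norm_of_nonneg (hp m).le, aJ_succ hq0 hq1]
  have hr : q ^ m * z / (1 - q ^ (m + 1)) ≤ 1/2 := by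
    have hle : 1 - q ≤ 1 - q ^ (m + 1) := by
      have : q ^ (m + 1) ≤ q := pow_le_of_le_one hq0.le hq1.le (Nat.succ_ne_zero m)
      linarith
    calc q ^ m * z / (1 - q ^ (m + 1)) ≤ q ^ m * z / (1 - q) :=
          div_le_div_of_nonneg_left (by positivity) hq1' hle
      _ = q ^ m * (z / (1 - q)) := by ring
      _ ≤ 1/2 := hm
  nlinarith [hp m, div_nonneg (by positivity : (0:ℝ) ≤ q ^ m * z) hD.le]

theorem turan_left_J (q z : ℝ) (n : ℕ) (hq0 : 0 < q) (hq1 : q < 1)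
    (hz : 0 < z) (hn : 1 ≤ n) :
    (q - q ^ (n + 2)) / (1 - q ^ (n + 2)) * (qExpTail q z (n + 1)) ^ 2 ≤
      qExpTail q z n * qExpTail q z (n + 2) := by
  have hsum := aJ_summable hq0 hq1 hz
  have hY : (0:ℝ) < 1 - q ^ (n + 2) := by
    have : q ^ (n + 2) < 1 := pow_lt_one₀ hq0.le hq1 (by omega)
    linarith
  have hc0 : 0 ≤ (q - q ^ (n + 2)) / (1 - q ^ (n + 2)) := by
    have : q ^ (n + 2) ≤ q := pow_le_of_le_one hq0.le hq1.le (by omega)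
    exact div_nonneg (by linarith) hY.le
  set c : ℝ := (q - q ^ (n + 2)) / (1 - q ^ (n + 2)) with hcdef
  have hT : ∀ m : ℕ, qExpTail q z m = ∑' k, aJ q z (m + k) := fun m => rfl
  have hs : ∀ m : ℕ, Summable (fun k => aJ q z (m + k)) := by
    intro m
    have := (summable_nat_add_iff (f := aJ q z) m).2 hsum
    simpa [Nat.add_comm] using this
  have hH : ∀ m : ℕ, Tendsto (fun N => ∑ k ∈ range N, aJ q z (m + k)) atTop
      (𝓝 (qExpTail q z m)) := by
    intro m
    have := (hs m).hasSum.tendsto_sum_nat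
    rwa [← hT m] at this
  have fin : ∀ N : ℕ, c * (∑ k ∈ range N, aJ q z (n + 1 + k)) ^ 2 ≤
      (∑ k ∈ range N, aJ q z (n + k)) * (∑ k ∈ range N, aJ q z (n + 2 + k)) := by
    intro N
    have hp := aJ_pos hq0 hq1 hz
    have hsqrt : Real.sqrt c * ∑ k ∈ range N, aJ q z (n + 1 + k) ≤
        ∑ k ∈ range N, Real.sqrt (aJ q z (n + k)) * Real.sqrt (aJ q z (n + 2 + k)) := by
      rw [Finset.mul_sum]
      refine Finset.sum_le_sum fun k _ => ?_
      calc Real.sqrt c * aJ q z (n + 1 + k)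
          = Real.sqrt (c * aJ q z (n + 1 + k) ^ 2) := by
            rw [Real.sqrt_mul hc0, Real.sqrt_sq (hp _).le]
        _ ≤ Real.sqrt (aJ q z (n + k) * aJ q z (n + 2 + k)) :=
            Real.sqrt_le_sqrt (key_step hq0 hq1 hz n k)
        _ = _ := Real.sqrt_mul (hp _).le _
    have hCS := Real.sum_sqrt_mul_sqrt_le (range N) (f := fun k => aJ q z (n + k))
      (g := fun k => aJ q z (n + 2 + k)) (fun k => (hp _).le) (fun k => (hp _).le)
    have hS1 : (0:ℝ) ≤ ∑ k ∈ range N, aJ q z (n + 1 + k) :=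
      Finset.sum_nonneg fun k _ => (hp _).le
    have hU : (0:ℝ) ≤ ∑ k ∈ range N, aJ q z (n + k) :=
      Finset.sum_nonneg fun k _ => (hp _).le
    have hV : (0:ℝ) ≤ ∑ k ∈ range N, aJ q z (n + 2 + k) :=
      Finset.sum_nonneg fun k _ => (hp _).le
    calc c * (∑ k ∈ range N, aJ q z (n + 1 + k)) ^ 2
        = (Real.sqrt c * ∑ k ∈ range N, aJ q z (n + 1 + k)) ^ 2 := by
          rw [mul_pow, Real.sq_sqrt hc0]
      _ ≤ (∑ k ∈ range N, Real.sqrt (aJ q z (n + k)) * Real.sqrt (aJ q z (n + 2 + k))) ^ 2 :=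
          pow_le_pow_left₀ (mul_nonneg (Real.sqrt_nonneg _) hS1) hsqrt 2
      _ ≤ (Real.sqrt (∑ k ∈ range N, aJ q z (n + k)) *
            Real.sqrt (∑ k ∈ range N, aJ q z (n + 2 + k))) ^ 2 :=
          pow_le_pow_left₀ (Finset.sum_nonneg fun k _ =>
            mul_nonneg (Real.sqrt_nonneg _) (Real.sqrt_nonneg _)) hCS 2
      _ = _ := by rw [mul_pow, Real.sq_sqrt hU, Real.sq_sqrt hV]
  have hL : Tendsto (fun N => c * (∑ k ∈ range N, aJ q z (n + 1 + k)) ^ 2) atTop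
      (𝓝 (c * (qExpTail q z (n + 1)) ^ 2)) := ((hH (n + 1)).pow 2).const_mul c
  have hR : Tendsto (fun N => (∑ k ∈ range N, aJ q z (n + k)) *
      (∑ k ∈ range N, aJ q z (n + 2 + k))) atTop
      (𝓝 (qExpTail q z n * qExpTail q z (n + 2))) := (hH n).mul (hH (n + 2))
  exact le_of_tendsto_of_tendsto' hL hR fin
end

section
/- For 0 < q < 1, 0 < z < 1, and n ≥ 1, the difference I_{n-1}(q;z)·I_{n+1}(q;z) - (I_n(q;z))^2 equals Σ_{k=n+2}^∞ [(q^k - q^{n+1})/((q;q)_{n+1}(q;q)_k)] z^{k+n}, and in particular every term of this series is negative. -/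
open Finset Filter Topology

lemma summable_a {q z : ℝ} (hq0 : 0 < q) (hq1 : q < 1) (hz0 : 0 < z) (hz1 : z < 1) :
    Summable (fun k : ℕ => z ^ k / qPoch q k) := by
  apply summable_of_ratio_norm_eventually_le (r := (1 + z) / 2) (by linarith)
  have h0 : Tendsto (fun k : ℕ => q ^ (k + 1)) atTop (𝓝 0) := by
    have := tendsto_pow_atTop_nhds_zero_of_lt_one hq0.le hq1
    exact this.comp (tendsto_add_atTop_nat 1)
  filter_upwards [h0.eventually_lt_const (show (0:ℝ) < (1 - z) / 2 by linarith)] with k hk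
  have hp := qPoch_pos hq0 hq1 k
  have hp1 := qPoch_pos hq0 hq1 (k + 1)
  have hq : q ^ (k + 1) < 1 := pow_lt_one₀ hq0.le hq1 (Nat.succ_ne_zero k)
  rw [Real.norm_eq_abs, Real.norm_eq_abs, abs_of_pos (by positivity), abs_of_pos (by positivity)]
  have key : z / (1 - q ^ (k + 1)) ≤ (1 + z) / 2 := by
    rw [div_le_div_iff₀ (by linarith) (by norm_num)]
    nlinarith [pow_pos hq0 (k + 1)]
  calc z ^ (k + 1) / qPoch q (k + 1)
      = (z / (1 - q ^ (k + 1))) * (z ^ k / qPoch q k) := by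
        rw [qPoch_succ, pow_succ]; field_simp
    _ ≤ (1 + z) / 2 * (z ^ k / qPoch q k) :=
        mul_le_mul_of_nonneg_right key (by positivity)

theorem I_turan_difference (q z : ℝ) (n : ℕ) (hq0 : 0 < q) (hq1 : q < 1)
    (hz0 : 0 < z) (hz1 : z < 1) (hn : 1 ≤ n) :
    (qexpTail q z n * qexpTail q z (n + 2) - (qexpTail q z (n + 1)) ^ 2 =
      ∑' k : ℕ, (q ^ (n + 2 + k) - q ^ (n + 1)) / (qPoch q (n + 1) * qPoch q (n + 2 + k)) *
        z ^ (n + 2 + k + n)) ∧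
    ∀ k : ℕ, (q ^ (n + 2 + k) - q ^ (n + 1)) / (qPoch q (n + 1) * qPoch q (n + 2 + k)) *
        z ^ (n + 2 + k + n) < 0 := by
  set a : ℕ → ℝ := fun k => z ^ k / qPoch q k with ha
  have hsum : Summable a := summable_a hq0 hq1 hz0 hz1
  have sa : ∀ m : ℕ, Summable (fun k : ℕ => a (m + k)) := by
    intro m
    have := (summable_nat_add_iff m).mpr hsum
    exact this.congr (fun k => by rw [Nat.add_comm])
  have hTail : ∀ m : ℕ, qexpTail q z m = ∑' k : ℕ, a (m + k) := fun m => rfl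
  have hT : ∀ m : ℕ, (∑' k : ℕ, a (m + k)) = a m + ∑' k : ℕ, a (m + 1 + k) := by
    intro m
    rw [(sa m).tsum_eq_zero_add]
    congr 1
    exact tsum_congr fun k => by rw [show m + (k + 1) = m + 1 + k by omega]
  have hpos : ∀ m : ℕ, 0 < a m := fun m => by
    simp only [ha]; exact div_pos (pow_pos hz0 m) (qPoch_pos hq0 hq1 m)
  have hc : ∀ k : ℕ,
      (q ^ (n + 2 + k) - q ^ (n + 1)) / (qPoch q (n + 1) * qPoch q (n + 2 + k)) *
        z ^ (n + 2 + k + n) = a n * a (n + 2 + k) - a (n + 1) * a (n + 1 + k) := by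
    intro k
    have e1 : qPoch q (n + 1) = qPoch q n * (1 - q ^ (n + 1)) := qPoch_succ q n
    have e2 : qPoch q (n + 2 + k) = qPoch q (n + 1 + k) * (1 - q ^ (n + 2 + k)) := by
      rw [show n + 2 + k = (n + 1 + k) + 1 by omega, qPoch_succ,
        show n + 1 + k + 1 = n + 2 + k by omega]
    have p0 := (qPoch_pos hq0 hq1 n).ne'
    have p1 := (qPoch_pos hq0 hq1 (n + 1 + k)).ne'
    have p2 : (1 - q ^ (n + 1)) ≠ 0 := by
      have : q ^ (n + 1) < 1 := pow_lt_one₀ hq0.le hq1 (Nat.succ_ne_zero n); linarith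
    have p3 : (1 - q ^ (n + 2 + k)) ≠ 0 := by
      have : q ^ (n + 2 + k) < 1 := pow_lt_one₀ hq0.le hq1 (by omega); linarith
    simp only [ha, e1, e2]
    field_simp
    ring
  have hneg : ∀ k : ℕ,
      (q ^ (n + 2 + k) - q ^ (n + 1)) / (qPoch q (n + 1) * qPoch q (n + 2 + k)) *
        z ^ (n + 2 + k + n) < 0 := by
    intro k
    have hnum : q ^ (n + 2 + k) - q ^ (n + 1) < 0 := by
      have : q ^ (n + 2 + k) < q ^ (n + 1) :=
        pow_lt_pow_right_of_lt_one₀ hq0 hq1 (by omega)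
      linarith
    have hden : 0 < qPoch q (n + 1) * qPoch q (n + 2 + k) :=
      mul_pos (qPoch_pos hq0 hq1 _) (qPoch_pos hq0 hq1 _)
    exact mul_neg_of_neg_of_pos (div_neg_of_neg_of_pos hnum hden) (pow_pos hz0 _)
  refine ⟨?_, hneg⟩
  have hsum2 : Summable (fun k : ℕ => a n * a (n + 2 + k)) := (sa (n + 2)).mul_left _
  have hsum1 : Summable (fun k : ℕ => a (n + 1) * a (n + 1 + k)) := (sa (n + 1)).mul_left _
  calc qexpTail q z n * qexpTail q z (n + 2) - qexpTail q z (n + 1) ^ 2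
      = a n * qexpTail q z (n + 2) - a (n + 1) * qexpTail q z (n + 1) := by
        have e0 : qexpTail q z n = a n + (a (n + 1) + qexpTail q z (n + 2)) := by
          rw [hTail n, hT n, ← hTail (n + 1), hTail (n + 1), hT (n + 1), ← hTail (n + 2)]
        have e1 : qexpTail q z (n + 1) = a (n + 1) + qexpTail q z (n + 2) := by
          rw [hTail (n + 1), hT (n + 1), ← hTail (n + 2)]
        rw [e0, e1]; ring
    _ = ∑' k : ℕ, (a n * a (n + 2 + k) - a (n + 1) * a (n + 1 + k)) := by
        rw [hsum2.tsum_sub hsum1, tsum_mul_left, tsum_mul_left, hTail (n + 2), hTail (n + 1)]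
    _ = _ := (tsum_congr fun k => (hc k).symm)
end

section
/- For every integer n ≥ 1 and real x > 0, the Turán type inequality (n+1)/(n+2) · (R_n(x))^2 < R_{n-1}(x) · R_{n+1}(x) < (R_n(x))^2 holds, where R_n(x) = e^x - Σ_{k=0}^n x^k/k! is the remainder of the exponential series (the q → 1 limit of Theorem 2; originally due to Alzer). -/
open Finset

noncomputable def expRem (n : ℕ) (x : ℝ) : ℝ :=
  Real.exp x - ∑ k ∈ Finset.range (n + 1), x ^ k / (Nat.factorial k)

private lemma fact_mul_fact_le (c i : ℕ) :
    ∀ j, Nat.factorial (i + c) * Nat.factorial (j + c) ≤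
      Nat.factorial c * Nat.factorial (i + j + c) := by
  intro j
  induction j with
  | zero =>
    have h : Nat.factorial c ≤ Nat.factorial (i + c) := Nat.factorial_le (by omega)
    simpa [Nat.mul_comm] using Nat.mul_le_mul_left (Nat.factorial (i + c)) h
  | succ j ih =>
    have h1 : j + 1 + c = (j + c) + 1 := by omega
    have h2 : i + (j + 1) + c = (i + j + c) + 1 := by omega
    rw [h1, h2, Nat.factorial_succ, Nat.factorial_succ]
    calc Nat.factorial (i + c) * ((j + c + 1) * Nat.factorial (j + c))
        = (j + c + 1) * (Nat.factorial (i + c) * Nat.factorial (j + c)) := by ring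
      _ ≤ (j + c + 1) * (Nat.factorial c * Nat.factorial (i + j + c)) :=
          Nat.mul_le_mul_left _ ih
      _ ≤ (i + j + c + 1) * (Nat.factorial c * Nat.factorial (i + j + c)) :=
          Nat.mul_le_mul_right _ (by omega)
      _ = Nat.factorial c * ((i + j + c + 1) * Nat.factorial (i + j + c)) := by ring

private lemma exp_tsum (x : ℝ) : Real.exp x = ∑' k : ℕ, x ^ k / (Nat.factorial k) := by
  rw [Real.exp_eq_exp_ℝ, NormedSpace.exp_eq_tsum_div]

private lemma summable_tail (x : ℝ) (c : ℕ) :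
    Summable fun k : ℕ => x ^ (k + c) / (Nat.factorial (k + c) : ℝ) :=
  (summable_nat_add_iff c).2 (Real.summable_pow_div_factorial x)

private lemma summable_norm_tail (x : ℝ) (c : ℕ) :
    Summable fun k : ℕ => ‖x ^ (k + c) / (Nat.factorial (k + c) : ℝ)‖ := by
  simpa only [Real.norm_eq_abs] using (summable_tail x c).abs

private lemma expRem_tsum (n : ℕ) (x : ℝ) :
    expRem n x = ∑' k : ℕ, x ^ (k + (n + 1)) / (Nat.factorial (k + (n + 1)) : ℝ) := by
  have h := Summable.sum_add_tsum_nat_add (f := fun k : ℕ => x ^ k / (Nat.factorial k : ℝ)) (n + 1)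
    (Real.summable_pow_div_factorial x)
  rw [expRem, exp_tsum]
  linarith [h]

/-- The `m`-th Cauchy-product coefficient of `expRem (a-1) * expRem (b-1)`. -/
private noncomputable def S (x : ℝ) (a b m : ℕ) : ℝ :=
  ∑ k ∈ range (m + 1),
    (x ^ (k + a) / (Nat.factorial (k + a) : ℝ)) *
      (x ^ (m - k + b) / (Nat.factorial (m - k + b) : ℝ))

private lemma prod_tsum (x : ℝ) (a b : ℕ) :
    (∑' k : ℕ, x ^ (k + a) / (Nat.factorial (k + a) : ℝ)) *
      (∑' k : ℕ, x ^ (k + b) / (Nat.factorial (k + b) : ℝ)) = ∑' m : ℕ, S x a b m :=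
  tsum_mul_tsum_eq_tsum_sum_range_of_summable_norm (summable_norm_tail x a)
    (summable_norm_tail x b)

private lemma summable_S (x : ℝ) (a b : ℕ) : Summable fun m => S x a b m :=
  (summable_norm_sum_mul_range_of_summable_norm (summable_norm_tail x a)
    (summable_norm_tail x b)).of_norm

/-- the common term -/
private noncomputable def T (x : ℝ) (n m k : ℕ) : ℝ :=
  (x ^ (k + (n + 1)) / (Nat.factorial (k + (n + 1)) : ℝ)) *
    (x ^ (m - k + (n + 1)) / (Nat.factorial (m - k + (n + 1)) : ℝ))

private lemma T_nonneg {x : ℝ} (hx : 0 < x) (n m k : ℕ) : 0 ≤ T x n m k := by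
  unfold T; positivity

private lemma T_eq (x : ℝ) {n m k : ℕ} (hk : k ≤ m) :
    T x n m k = x ^ (m + 2 * n + 2) /
      ((Nat.factorial (k + (n + 1)) : ℝ) * (Nat.factorial (m - k + (n + 1)) : ℝ)) := by
  unfold T
  rw [div_mul_div_comm, ← pow_add]
  have h : (k + (n + 1)) + (m - k + (n + 1)) = m + 2 * n + 2 := by omega
  rw [h]

private lemma S_right (x : ℝ) (n m : ℕ) :
    S x (n + 1) (n + 1) m = (∑ k ∈ range m, T x n m k) + T x n m m := by
  rw [S, Finset.sum_range_succ]; rfl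

private lemma S_left (x : ℝ) (n m : ℕ) :
    S x n (n + 2) m = (∑ k ∈ range m, T x n m k) +
      (x ^ n / (Nat.factorial n : ℝ)) *
        (x ^ (m + (n + 2)) / (Nat.factorial (m + (n + 2)) : ℝ)) := by
  rw [S, Finset.sum_range_succ']
  congr 1
  · apply Finset.sum_congr rfl
    intro k hk
    have hk' : k < m := Finset.mem_range.1 hk
    unfold T
    have h1 : k + 1 + n = k + (n + 1) := by omega
    have h2 : m - (k + 1) + (n + 2) = m - k + (n + 1) := by omega
    rw [h1, h2]
  · have h1 : 0 + n = n := by omega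
    have h2 : m - 0 + (n + 2) = m + (n + 2) := by omega
    rw [h1, h2]

private lemma F0_eq (x : ℝ) (n m : ℕ) :
    (x ^ n / (Nat.factorial n : ℝ)) *
        (x ^ (m + (n + 2)) / (Nat.factorial (m + (n + 2)) : ℝ)) =
      x ^ (m + 2 * n + 2) /
        ((Nat.factorial n : ℝ) * (Nat.factorial (m + n + 2) : ℝ)) := by
  rw [div_mul_div_comm, ← pow_add]
  have h1 : n + (m + (n + 2)) = m + 2 * n + 2 := by omega
  have h2 : m + (n + 2) = m + n + 2 := by omega
  rw [h1, h2]

private lemma Tm_eq (x : ℝ) (n m : ℕ) :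
    T x n m m = x ^ (m + 2 * n + 2) /
      ((Nat.factorial (m + n + 1) : ℝ) * (Nat.factorial (n + 1) : ℝ)) := by
  rw [T_eq x (le_refl m)]
  have h1 : m + (n + 1) = m + n + 1 := by omega
  have h2 : m - m + (n + 1) = n + 1 := by omega
  rw [h1, h2]

private lemma T_ge {x : ℝ} (hx : 0 < x) (n m : ℕ) {k : ℕ} (hk : k ≤ m) :
    x ^ (m + 2 * n + 2) /
        ((Nat.factorial (n + 1) : ℝ) * (Nat.factorial (m + n + 1) : ℝ)) ≤ T x n m k := by
  rw [T_eq x hk]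
  have hN : Nat.factorial (k + (n + 1)) * Nat.factorial (m - k + (n + 1)) ≤
      Nat.factorial (n + 1) * Nat.factorial (m + n + 1) := by
    have h := fact_mul_fact_le (n + 1) k (m - k)
    have h2 : k + (m - k) + (n + 1) = m + n + 1 := by omega
    rwa [h2] at h
  have hN' : ((Nat.factorial (k + (n + 1)) : ℝ) * (Nat.factorial (m - k + (n + 1)) : ℝ)) ≤
      (Nat.factorial (n + 1) : ℝ) * (Nat.factorial (m + n + 1) : ℝ) := by
    exact_mod_cast hN
  exact div_le_div_of_nonneg_left (by positivity)
    (mul_pos (by exact_mod_cast (k + (n + 1)).factorial_pos)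
      (by exact_mod_cast (m - k + (n + 1)).factorial_pos)) hN'

/-- key coefficientwise upper bound: strict for every `m`. -/
private lemma coeff_upper {x : ℝ} (hx : 0 < x) (n m : ℕ) :
    S x n (n + 2) m < S x (n + 1) (n + 1) m := by
  rw [S_left, S_right]
  have hKey : (x ^ n / (Nat.factorial n : ℝ)) *
      (x ^ (m + (n + 2)) / (Nat.factorial (m + (n + 2)) : ℝ)) < T x n m m := by
    rw [F0_eq, Tm_eq]
    have hN : Nat.factorial (m + n + 1) * Nat.factorial (n + 1) <
        Nat.factorial n * Nat.factorial (m + n + 2) := by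
      rw [Nat.factorial_succ (m + n + 1), Nat.factorial_succ n]
      calc Nat.factorial (m + n + 1) * ((n + 1) * Nat.factorial n)
          = (n + 1) * (Nat.factorial (m + n + 1) * Nat.factorial n) := by ring
        _ < (m + n + 2) * (Nat.factorial (m + n + 1) * Nat.factorial n) := by
            apply mul_lt_mul_of_pos_right (by omega)
            positivity
        _ = Nat.factorial n * ((m + n + 2) * Nat.factorial (m + n + 1)) := by ring
    have hN' : ((Nat.factorial (m + n + 1) : ℝ) * (Nat.factorial (n + 1) : ℝ)) <
        (Nat.factorial n : ℝ) * (Nat.factorial (m + n + 2) : ℝ) := by exact_mod_cast hN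
    apply div_lt_div_of_pos_left (by positivity) (by positivity) hN'
  linarith [hKey]

private lemma key_nat (n m : ℕ) :
    (n + 1) * (Nat.factorial n * Nat.factorial (m + n + 2)) ≤
      m * (Nat.factorial n * Nat.factorial (m + n + 2)) +
        (n + 2) * (Nat.factorial (n + 1) * Nat.factorial (m + n + 1)) := by
  rw [Nat.factorial_succ (m + n + 1), Nat.factorial_succ n]
  have h : (n + 1) * (m + n + 2) ≤ m * (m + n + 2) + (n + 2) * (n + 1) := by nlinarith
  calc (n + 1) * (Nat.factorial n * ((m + n + 2) * Nat.factorial (m + n + 1)))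
      = ((n + 1) * (m + n + 2)) * (Nat.factorial n * Nat.factorial (m + n + 1)) := by ring
    _ ≤ (m * (m + n + 2) + (n + 2) * (n + 1)) *
          (Nat.factorial n * Nat.factorial (m + n + 1)) :=
        Nat.mul_le_mul_right _ h
    _ = m * (Nat.factorial n * ((m + n + 2) * Nat.factorial (m + n + 1))) +
          (n + 2) * ((n + 1) * Nat.factorial n * Nat.factorial (m + n + 1)) := by ring
    _ = _ := by ring

private lemma key_nat_strict (n : ℕ) (m : ℕ) (hm : 1 ≤ m) :
    (n + 1) * (Nat.factorial n * Nat.factorial (m + n + 2)) <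
      m * (Nat.factorial n * Nat.factorial (m + n + 2)) +
        (n + 2) * (Nat.factorial (n + 1) * Nat.factorial (m + n + 1)) := by
  rw [Nat.factorial_succ (m + n + 1), Nat.factorial_succ n]
  have h : (n + 1) * (m + n + 2) < m * (m + n + 2) + (n + 2) * (n + 1) := by nlinarith
  calc (n + 1) * (Nat.factorial n * ((m + n + 2) * Nat.factorial (m + n + 1)))
      = ((n + 1) * (m + n + 2)) * (Nat.factorial n * Nat.factorial (m + n + 1)) := by ring
    _ < (m * (m + n + 2) + (n + 2) * (n + 1)) *
          (Nat.factorial n * Nat.factorial (m + n + 1)) := by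
        apply mul_lt_mul_of_pos_right h; positivity
    _ = m * (Nat.factorial n * ((m + n + 2) * Nat.factorial (m + n + 1))) +
          (n + 2) * ((n + 1) * Nat.factorial n * Nat.factorial (m + n + 1)) := by ring
    _ = _ := by ring

/-- coefficientwise lower bound. -/
private lemma coeff_lower {x : ℝ} (hx : 0 < x) (n m : ℕ) :
    ((n : ℝ) + 1) * S x (n + 1) (n + 1) m ≤ ((n : ℝ) + 2) * S x n (n + 2) m := by
  rw [S_left, S_right, F0_eq, Tm_eq]
  set y : ℝ := x ^ (m + 2 * n + 2) with hy
  have hy0 : 0 < y := by rw [hy]; positivity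
  set Ssum : ℝ := ∑ k ∈ range m, T x n m k with hS
  set D1 : ℝ := (Nat.factorial (n + 1) : ℝ) * (Nat.factorial (m + n + 1) : ℝ) with hD1
  set D2 : ℝ := (Nat.factorial n : ℝ) * (Nat.factorial (m + n + 2) : ℝ) with hD2
  have hD1pos : 0 < D1 := by rw [hD1]; positivity
  have hD2pos : 0 < D2 := by rw [hD2]; positivity
  have hT : y / ((Nat.factorial (m + n + 1) : ℝ) * (Nat.factorial (n + 1) : ℝ)) = y / D1 := by
    rw [hD1, mul_comm]
  rw [hT]
  -- Ssum ≥ m * (y / D1)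
  have hS1 : (m : ℝ) * (y / D1) ≤ Ssum := by
    have := Finset.card_nsmul_le_sum (range m) (T x n m) (y / D1)
      (fun k hk => T_ge hx n m (le_of_lt (Finset.mem_range.1 hk)))
    simpa [nsmul_eq_mul] using this
  have hS0 : 0 ≤ Ssum := Finset.sum_nonneg fun k _ => T_nonneg hx n m k
  -- key: (n+1) * (y/D1) ≤ m * (y/D1) + (n+2) * (y/D2)
  have hkey : ((n : ℝ) + 1) * (y / D1) ≤ (m : ℝ) * (y / D1) + ((n : ℝ) + 2) * (y / D2) := by
    have hN : ((n : ℝ) + 1) * D2 ≤ (m : ℝ) * D2 + ((n : ℝ) + 2) * D1 := by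
      have := key_nat n m
      rw [hD1, hD2]; push_cast; exact_mod_cast (by exact_mod_cast this : 
        ((n : ℝ) + 1) * ((Nat.factorial n : ℝ) * (Nat.factorial (m + n + 2) : ℝ)) ≤
          (m : ℝ) * ((Nat.factorial n : ℝ) * (Nat.factorial (m + n + 2) : ℝ)) +
            ((n : ℝ) + 2) * ((Nat.factorial (n + 1) : ℝ) * (Nat.factorial (m + n + 1) : ℝ)))
    have h' := mul_le_mul_of_nonneg_right hN
      (le_of_lt (div_pos hy0 (mul_pos hD1pos hD2pos)))
    have e1 : (((n : ℝ) + 1) * D2) * (y / (D1 * D2)) = ((n : ℝ) + 1) * (y / D1) := by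
      field_simp
    have e2 : ((m : ℝ) * D2 + ((n : ℝ) + 2) * D1) * (y / (D1 * D2)) =
        (m : ℝ) * (y / D1) + ((n : ℝ) + 2) * (y / D2) := by
      field_simp
    rw [e1, e2] at h'
    exact h'
  nlinarith [hkey, hS1, hS0, hy0, Nat.cast_nonneg (α := ℝ) n]

private lemma coeff_lower_strict {x : ℝ} (hx : 0 < x) (n m : ℕ) (hm : 1 ≤ m) :
    ((n : ℝ) + 1) * S x (n + 1) (n + 1) m < ((n : ℝ) + 2) * S x n (n + 2) m := by
  rw [S_left, S_right, F0_eq, Tm_eq]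
  set y : ℝ := x ^ (m + 2 * n + 2) with hy
  have hy0 : 0 < y := by rw [hy]; positivity
  set Ssum : ℝ := ∑ k ∈ range m, T x n m k with hS
  set D1 : ℝ := (Nat.factorial (n + 1) : ℝ) * (Nat.factorial (m + n + 1) : ℝ) with hD1
  set D2 : ℝ := (Nat.factorial n : ℝ) * (Nat.factorial (m + n + 2) : ℝ) with hD2
  have hD1pos : 0 < D1 := by
    rw [hD1]
    exact mul_pos (by exact_mod_cast (n + 1).factorial_pos)
      (by exact_mod_cast (m + n + 1).factorial_pos)
  have hD2pos : 0 < D2 := by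
    rw [hD2]
    exact mul_pos (by exact_mod_cast n.factorial_pos)
      (by exact_mod_cast (m + n + 2).factorial_pos)
  have hT : y / ((Nat.factorial (m + n + 1) : ℝ) * (Nat.factorial (n + 1) : ℝ)) = y / D1 := by
    rw [hD1, mul_comm]
  rw [hT]
  have hS1 : (m : ℝ) * (y / D1) ≤ Ssum := by
    have := Finset.card_nsmul_le_sum (range m) (T x n m) (y / D1)
      (fun k hk => T_ge hx n m (le_of_lt (Finset.mem_range.1 hk)))
    simpa [nsmul_eq_mul] using this
  have hS0 : 0 ≤ Ssum := Finset.sum_nonneg fun k _ => T_nonneg hx n m k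
  have hkey : ((n : ℝ) + 1) * (y / D1) < (m : ℝ) * (y / D1) + ((n : ℝ) + 2) * (y / D2) := by
    have hN : ((n : ℝ) + 1) * D2 < (m : ℝ) * D2 + ((n : ℝ) + 2) * D1 := by
      have hnat := key_nat_strict n m hm
      rw [hD1, hD2]
      exact_mod_cast (by exact_mod_cast hnat :
        ((n : ℝ) + 1) * ((Nat.factorial n : ℝ) * (Nat.factorial (m + n + 2) : ℝ)) <
          (m : ℝ) * ((Nat.factorial n : ℝ) * (Nat.factorial (m + n + 2) : ℝ)) +
            ((n : ℝ) + 2) * ((Nat.factorial (n + 1) : ℝ) * (Nat.factorial (m + n + 1) : ℝ)))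
    have h' := mul_lt_mul_of_pos_right hN (div_pos hy0 (mul_pos hD1pos hD2pos))
    have e1 : (((n : ℝ) + 1) * D2) * (y / (D1 * D2)) = ((n : ℝ) + 1) * (y / D1) := by
      field_simp
    have e2 : ((m : ℝ) * D2 + ((n : ℝ) + 2) * D1) * (y / (D1 * D2)) =
        (m : ℝ) * (y / D1) + ((n : ℝ) + 2) * (y / D2) := by
      field_simp
    rw [e1, e2] at h'
    exact h'
  nlinarith [hkey, hS1, hS0, hy0, Nat.cast_nonneg (α := ℝ) n]

private lemma S_nonneg {x : ℝ} (hx : 0 < x) (a b m : ℕ) : 0 ≤ S x a b m := by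
  apply Finset.sum_nonneg
  intro k _
  positivity

theorem alzer_turan (n : ℕ) (x : ℝ) (hn : 1 ≤ n) (hx : 0 < x) :
    ((n : ℝ) + 1) / ((n : ℝ) + 2) * (expRem n x) ^ 2 < expRem (n - 1) x * expRem (n + 1) x ∧
    expRem (n - 1) x * expRem (n + 1) x < (expRem n x) ^ 2 := by
  have h1 : expRem (n - 1) x = ∑' k : ℕ, x ^ (k + n) / (Nat.factorial (k + n) : ℝ) := by
    have h := expRem_tsum (n - 1) x
    rwa [Nat.sub_add_cancel hn] at h
  have h2 : expRem n x = ∑' k : ℕ, x ^ (k + (n + 1)) / (Nat.factorial (k + (n + 1)) : ℝ) :=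
    expRem_tsum n x
  have h3 : expRem (n + 1) x = ∑' k : ℕ, x ^ (k + (n + 2)) / (Nat.factorial (k + (n + 2)) : ℝ) := by
    have h := expRem_tsum (n + 1) x
    have e : n + 1 + 1 = n + 2 := by omega
    rwa [e] at h
  have hprodL : expRem (n - 1) x * expRem (n + 1) x = ∑' m : ℕ, S x n (n + 2) m := by
    rw [h1, h3]; exact prod_tsum x n (n + 2)
  have hprodR : (expRem n x) ^ 2 = ∑' m : ℕ, S x (n + 1) (n + 1) m := by
    rw [h2, sq]; exact prod_tsum x (n + 1) (n + 1)
  constructor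
  · -- lower bound
    have hlt : ∑' m : ℕ, ((n : ℝ) + 1) * S x (n + 1) (n + 1) m <
        ∑' m : ℕ, ((n : ℝ) + 2) * S x n (n + 2) m := by
      apply Summable.tsum_lt_tsum_of_nonneg (i := 1)
      · intro b
        have := S_nonneg hx (n + 1) (n + 1) b
        positivity
      · intro b; exact coeff_lower hx n b
      · exact coeff_lower_strict hx n 1 (le_refl 1)
      · exact (summable_S x n (n + 2)).mul_left _
    rw [tsum_mul_left, tsum_mul_left, ← hprodL, ← hprodR] at hlt
    rw [div_mul_eq_mul_div, div_lt_iff₀ (by positivity)]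
    linarith [hlt]
  · -- upper bound
    rw [hprodL, hprodR]
    apply Summable.tsum_lt_tsum_of_nonneg (i := 0)
    · intro b; exact S_nonneg hx n (n + 2) b
    · intro b; exact le_of_lt (coeff_upper hx n b)
    · exact coeff_upper hx n 0
    · exact summable_S x (n + 1) (n + 1)
end

section
/- For 0 < q < 1 and all z ∈ ℝ, the series Σ_{n=0}^∞ q^{n(n-1)/2} z^n/(q;q)_n converges and equals ∏_{k=0}^∞ (1 + z q^k). -/
open Finset Filter Topology

lemma abs_log_one_add_le' {x : ℝ} (hx : |x| ≤ 1/2) : |Real.log (1 + x)| ≤ 2 * |x| := by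
  have hx1 : -(1/2) ≤ x := (abs_le.1 hx).1
  have hx2 : x ≤ 1/2 := (abs_le.1 hx).2
  have hpos : (0:ℝ) < 1 + x := by linarith
  rw [abs_le]
  constructor
  · have h1 : Real.log (1 + x)⁻¹ ≤ (1 + x)⁻¹ - 1 :=
      Real.log_le_sub_one_of_pos (by positivity)
    rw [Real.log_inv] at h1
    have h2 : (1 + x)⁻¹ - 1 = -x / (1 + x) := by field_simp; ring
    have h3 : -x / (1 + x) ≤ 2 * |x| := by
      rw [div_le_iff₀ hpos]
      have := abs_nonneg x
      have h4 : -x ≤ |x| := neg_le_abs x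
      nlinarith [le_abs_self x]
    nlinarith
  · have h1 : Real.log (1 + x) ≤ (1 + x) - 1 := Real.log_le_sub_one_of_pos hpos
    have := le_abs_self x
    have := abs_nonneg x
    nlinarith

section aux
variable {q : ℝ} (hq0 : 0 < q) (hq1 : q < 1)

noncomputable def qg (q w : ℝ) (n : ℕ) : ℝ := q ^ (n * (n - 1) / 2) * w ^ n / qPoch q n

noncomputable def qS (q w : ℝ) : ℝ := ∑' n, qg q w n

lemma qg_zero (q w : ℝ) : qg q w 0 = 1 := by simp [qg, qPoch]

include hq0 hq1

lemma qPoch_pos_s13 (n : ℕ) : 0 < qPoch q n := by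
  apply Finset.prod_pos
  intro j _
  have : q ^ (j + 1) < 1 := pow_lt_one₀ hq0.le hq1 (Nat.succ_ne_zero j)
  linarith

lemma qg_succ (w : ℝ) (n : ℕ) :
    qg q w (n + 1) = q ^ (n * (n - 1) / 2) * q ^ n * w ^ (n + 1) / (qPoch q n * (1 - q ^ (n + 1))) := by
  have h2 : qPoch q (n + 1) = qPoch q n * (1 - q ^ (n + 1)) := Finset.prod_range_succ _ n
  simp only [qg, h2]
  rw [show (n + 1) * (n + 1 - 1) / 2 = n * (n - 1) / 2 + n from Nat.triangle_succ n, pow_add]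

lemma qg_summable (w : ℝ) : Summable (qg q w) := by
  have hq' : (0:ℝ) < 1 - q := by linarith
  obtain ⟨N, hN⟩ : ∃ N : ℕ, ∀ n ≥ N, q ^ n * |w| ≤ (1/2) * (1 - q) := by
    have hc : (0:ℝ) < (1/2) * (1 - q) / (|w| + 1) := by
      apply div_pos (by linarith) (by positivity)
    rcases ((tendsto_pow_atTop_nhds_zero_of_lt_one hq0.le hq1).eventually_le_const hc).exists_forall_of_atTop
      with ⟨N, hN⟩
    refine ⟨N, fun n hn => ?_⟩
    have h0 := hN n hn
    have h1 : |w| ≤ |w| + 1 := by linarith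
    calc q ^ n * |w| ≤ ((1/2) * (1 - q) / (|w| + 1)) * (|w| + 1) := by
          apply mul_le_mul h0 h1 (abs_nonneg w) (by positivity)
      _ = (1/2) * (1 - q) := by field_simp
  apply summable_of_ratio_norm_eventually_le (show (1:ℝ)/2 < 1 by norm_num)
  filter_upwards [eventually_ge_atTop N] with n hn
  have hP := qPoch_pos_s13 hq0 hq1 n
  have hq1n : (0:ℝ) < 1 - q ^ (n + 1) := by
    have : q ^ (n + 1) < 1 := pow_lt_one₀ hq0.le hq1 (Nat.succ_ne_zero n)
    linarith
  rw [qg_succ hq0 hq1]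
  have habs : ‖qg q w n‖ = q ^ (n * (n - 1) / 2) * |w| ^ n / qPoch q n := by
    simp [qg, abs_div, abs_mul, abs_pow, abs_of_pos hq0, abs_of_pos hP]
  rw [habs]
  have h1 : ‖q ^ (n * (n - 1) / 2) * q ^ n * w ^ (n + 1) / (qPoch q n * (1 - q ^ (n + 1)))‖
      = q ^ (n * (n - 1) / 2) * q ^ n * |w| ^ (n + 1) / (qPoch q n * (1 - q ^ (n + 1))) := by
    simp only [Real.norm_eq_abs, abs_div, abs_mul, abs_pow, abs_of_pos hq0, abs_of_pos hP,
      abs_of_pos hq1n]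
  rw [h1]
  have hq1n' : 1 - q ≤ 1 - q ^ (n + 1) := by
    have h := pow_le_pow_of_le_one hq0.le hq1.le (show 1 ≤ n + 1 by omega)
    rw [pow_one] at h
    linarith
  have key : q ^ n * |w| / (1 - q ^ (n + 1)) ≤ 1/2 := by
    rw [div_le_iff₀ hq1n]
    have := hN n hn
    nlinarith
  calc q ^ (n * (n - 1) / 2) * q ^ n * |w| ^ (n + 1) / (qPoch q n * (1 - q ^ (n + 1)))
      = (q ^ (n * (n - 1) / 2) * |w| ^ n / qPoch q n) * (q ^ n * |w| / (1 - q ^ (n + 1))) := by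
        rw [pow_succ]
        field_simp
    _ ≤ (q ^ (n * (n - 1) / 2) * |w| ^ n / qPoch q n) * (1/2) :=
        mul_le_mul_of_nonneg_left key (by positivity)
    _ = 1 / 2 * (q ^ (n * (n - 1) / 2) * |w| ^ n / qPoch q n) := by ring

lemma qg_rec (w : ℝ) (n : ℕ) :
    qg q w (n + 1) = qg q (q * w) (n + 1) + w * qg q (q * w) n := by
  have hP := (qPoch_pos_s13 hq0 hq1 n).ne'
  have hq1n : (1:ℝ) - q ^ (n + 1) ≠ 0 := by
    have : q ^ (n + 1) < 1 := pow_lt_one₀ hq0.le hq1 (Nat.succ_ne_zero n)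
    linarith
  rw [qg_succ hq0 hq1, qg_succ hq0 hq1]
  show _ = _ + w * (q ^ (n * (n - 1) / 2) * (q*w) ^ n / qPoch q n)
  rw [mul_pow, mul_pow]
  field_simp
  ring

lemma qS_funeq (w : ℝ) : qS q w = (1 + w) * qS q (q * w) := by
  have hs := qg_summable hq0 hq1 w
  have hs' := qg_summable hq0 hq1 (q * w)
  have hs'1 : Summable (fun n => qg q (q * w) (n + 1)) :=
    (summable_nat_add_iff 1).2 hs'
  have e1 : qS q w = 1 + ∑' n, qg q w (n + 1) := by
    rw [qS, Summable.tsum_eq_zero_add hs, qg_zero]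
  have e2 : qS q (q * w) = 1 + ∑' n, qg q (q * w) (n + 1) := by
    rw [qS, Summable.tsum_eq_zero_add hs', qg_zero]
  have e3 : ∑' n, qg q w (n + 1)
      = (∑' n, qg q (q * w) (n + 1)) + w * qS q (q * w) := by
    have h : ∀ n, qg q w (n + 1) = qg q (q * w) (n + 1) + w * qg q (q * w) n :=
      qg_rec hq0 hq1 w
    rw [tsum_congr h, Summable.tsum_add hs'1 (hs'.mul_left w), tsum_mul_left]
    rfl
  rw [e1, e3, e2]
  ring

lemma qS_iter (z : ℝ) (N : ℕ) :
    qS q z = (∏ k ∈ Finset.range N, (1 + z * q ^ k)) * qS q (q ^ N * z) := by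
  induction N with
  | zero => simp
  | succ n ih =>
    rw [ih, qS_funeq hq0 hq1 (q ^ n * z), Finset.prod_range_succ,
      show q * (q ^ n * z) = q ^ (n + 1) * z by ring]
    ring

lemma qS_tendsto_one (z : ℝ) :
    Tendsto (fun N : ℕ => qS q (q ^ N * z)) atTop (𝓝 1) := by
  have hbound : Summable (fun n => q ^ (n * (n - 1) / 2) * |z| ^ n / qPoch q n) := by
    have := qg_summable hq0 hq1 |z|
    exact this
  have key : Tendsto (fun N : ℕ => ∑' n, qg q (q ^ N * z) n) atTop
      (𝓝 (∑' n : ℕ, if n = 0 then (1:ℝ) else 0)) := by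
    apply tendsto_tsum_of_dominated_convergence hbound
    · intro n
      rcases Nat.eq_zero_or_pos n with rfl | hn
      · simpa [qg_zero] using tendsto_const_nhds
      · have hn0 : n ≠ 0 := hn.ne'
        simp only [hn0, if_false]
        have h : ∀ N : ℕ, qg q (q ^ N * z) n
            = (q ^ (n * (n - 1) / 2) * z ^ n / qPoch q n) * (q ^ n) ^ N := by
          intro N
          simp only [qg, mul_pow, ← pow_mul]
          rw [show N * n = n * N from mul_comm N n]
          ring
        rw [funext h]
        have hqn : |q ^ n| < 1 := by
          rw [abs_of_pos (by positivity)]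
          exact pow_lt_one₀ hq0.le hq1 hn0
        simpa using (tendsto_pow_atTop_nhds_zero_of_abs_lt_one hqn).const_mul _
    · filter_upwards with N n
      have hP := qPoch_pos_s13 hq0 hq1 n
      have h1 : ‖qg q (q ^ N * z) n‖ = q ^ (n * (n - 1) / 2) * |q ^ N * z| ^ n / qPoch q n := by
        simp [qg, abs_div, abs_mul, abs_pow, abs_of_pos hq0, abs_of_pos hP]
      rw [h1]
      have hzz : |q ^ N * z| ≤ |z| := by
        rw [abs_mul, abs_pow, abs_of_pos hq0]
        nlinarith [abs_nonneg z, pow_le_one₀ (n := N) hq0.le hq1.le]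
      gcongr
  have h0 : (∑' n : ℕ, if n = 0 then (1:ℝ) else 0) = 1 := tsum_ite_eq 0 1
  rw [h0] at key
  exact key

lemma prod_tendsto (z : ℝ) :
    Tendsto (fun N : ℕ => ∏ k ∈ Finset.range N, (1 + z * q ^ k)) atTop
      (𝓝 (∏' k : ℕ, (1 + z * q ^ k))) := by
  have hmult : Multipliable (fun k : ℕ => 1 + z * q ^ k) := by
    obtain ⟨K, hK⟩ : ∃ K : ℕ, |z| * q ^ K ≤ 1/2 := by
      have h0 := (tendsto_pow_atTop_nhds_zero_of_lt_one hq0.le hq1).const_mul |z|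
      rw [mul_zero] at h0
      exact (h0.eventually_le_const (show (0:ℝ) < 1/2 by norm_num)).exists
    have htail : ∀ k : ℕ, |z * q ^ (k + K)| ≤ 1/2 := by
      intro k
      rw [abs_mul, abs_pow, abs_of_pos hq0, pow_add]
      calc |z| * (q ^ k * q ^ K) = (|z| * q ^ K) * q ^ k := by ring
        _ ≤ (1/2) * 1 := by
            apply mul_le_mul hK (pow_le_one₀ hq0.le hq1.le) (by positivity)
            norm_num
        _ = 1/2 := by norm_num
    have htpos : ∀ k : ℕ, (0:ℝ) < 1 + z * q ^ (k + K) := by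
      intro k
      have := (abs_le.1 (htail k)).1
      linarith
    have hsumlog : Summable (fun k : ℕ => Real.log (1 + z * q ^ (k + K))) := by
      apply Summable.of_norm_bounded (g := fun k : ℕ => (2 * (|z| * q ^ K)) * q ^ k)
      · exact (summable_geometric_of_lt_one hq0.le hq1).mul_left _
      · intro k
        calc ‖Real.log (1 + z * q ^ (k + K))‖ ≤ 2 * |z * q ^ (k + K)| :=
              abs_log_one_add_le' (htail k)
          _ = (2 * (|z| * q ^ K)) * q ^ k := by
              rw [abs_mul, abs_pow, abs_of_pos hq0, pow_add]; ring
    have hprod : HasProd (fun k : ℕ => 1 + z * q ^ (k + K))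
        (Real.exp (∑' k : ℕ, Real.log (1 + z * q ^ (k + K)))) :=
      hsumlog.hasSum.rexp.congr_fun (fun k => (Real.exp_log (htpos k)).symm)
    exact ⟨_, HasProd.prod_range_mul (f := fun k : ℕ => 1 + z * q ^ k) (k := K) hprod⟩
  exact hmult.hasProd.tendsto_prod_nat

end aux

theorem euler_q_Exponential (q z : ℝ) (hq0 : 0 < q) (hq1 : q < 1) :
    Summable (fun n : ℕ => q ^ (n * (n - 1) / 2) * z ^ n / qPoch q n) ∧
    ∑' n : ℕ, q ^ (n * (n - 1) / 2) * z ^ n / qPoch q n = ∏' k : ℕ, (1 + z * q ^ k) := by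
  refine ⟨qg_summable hq0 hq1 z, ?_⟩
  have h1 : Tendsto (fun N : ℕ => (∏ k ∈ Finset.range N, (1 + z * q ^ k)) * qS q (q ^ N * z))
      atTop (𝓝 ((∏' k : ℕ, (1 + z * q ^ k)) * 1)) :=
    (prod_tendsto hq0 hq1 z).mul (qS_tendsto_one hq0 hq1 z)
  have h2 : (fun N : ℕ => (∏ k ∈ Finset.range N, (1 + z * q ^ k)) * qS q (q ^ N * z))
      = fun _ => qS q z := by
    ext N
    exact (qS_iter hq0 hq1 z N).symm
  rw [h2] at h1
  have h3 := tendsto_nhds_unique tendsto_const_nhds h1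
  rw [mul_one] at h3
  exact h3
end

section
/- For 0 < q < 1, z > 0, and n ≥ 0, the identity J_n(q;z)·(q^{n(n+1)/2} z^{n+1}/(q;q)_{n+1} - q^{n(n-1)/2} z^n/(q;q)_n) + q^{n^2} z^{2n+1}/((q;q)_n (q;q)_{n+1}) = Σ_{k=0}^∞ q^{(n(n+1)+(n+k)(n+k+1))/2} (1 - q^{k+1}) / ((q;q)_{n+1}(q;q)_{n+k+2}) · z^{2n+2+k} holds. -/
open Finset Filter Topology

lemma two_dvd_mul_succ (m : ℕ) : 2 ∣ m * (m + 1) := (Nat.even_mul_succ_self m).two_dvd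

lemma two_dvd_mul_pred (m : ℕ) : 2 ∣ m * (m - 1) := by
  cases m with
  | zero => simp
  | succ k => rw [Nat.succ_sub_one, Nat.mul_comm]; exact two_dvd_mul_succ k

theorem J_linear_identity (q z : ℝ) (n : ℕ) (hq0 : 0 < q) (hq1 : q < 1) (hz : 0 < z) :
    qExpTail q z (n + 1) *
        (q ^ (n * (n + 1) / 2) * z ^ (n + 1) / qPoch q (n + 1) -
          q ^ (n * (n - 1) / 2) * z ^ n / qPoch q n) +
        q ^ (n ^ 2) * z ^ (2 * n + 1) / (qPoch q n * qPoch q (n + 1)) =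
      ∑' k : ℕ, q ^ ((n * (n + 1) + (n + k) * (n + k + 1)) / 2) * (1 - q ^ (k + 1)) /
        (qPoch q (n + 1) * qPoch q (n + k + 2)) * z ^ (2 * n + 2 + k) := by
  have hq1' : (0:ℝ) < 1 - q := by linarith
  have hPn := qPoch_pos hq0 hq1 n
  have hPn1 := qPoch_pos hq0 hq1 (n + 1)
  -- the clean term of the tail series
  set f : ℕ → ℝ := fun k => q ^ ((n + 1 + k) * (n + k) / 2) * z ^ (n + 1 + k) / qPoch q (n + 1 + k) with hf_def
  have hfpos : ∀ k, 0 < f k := by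
    intro k
    exact div_pos (mul_pos (pow_pos hq0 _) (pow_pos hz _)) (qPoch_pos hq0 hq1 _)
  -- the tail equals ∑' f
  have hJ : qExpTail q z (n + 1) = ∑' k, f k := by
    unfold qExpTail
    apply tsum_congr
    intro k
    have : n + 1 + k - 1 = n + k := by omega
    rw [this]
  -- exponent arithmetic
  have hexp_succ : ∀ k : ℕ, (n + 1 + (k + 1)) * (n + (k + 1)) / 2
      = (n + 1 + k) * (n + k) / 2 + (n + 1 + k) := by
    intro k
    refine Nat.eq_of_mul_eq_mul_left (show 0 < 2 by norm_num) ?_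
    have h1 : 2 * ((n + 1 + (k + 1)) * (n + (k + 1)) / 2) = (n + 1 + (k + 1)) * (n + (k + 1)) := by
      apply Nat.mul_div_cancel'
      have := two_dvd_mul_succ (n + k + 1)
      convert this using 1; ring
    have h2 : 2 * ((n + 1 + k) * (n + k) / 2) = (n + 1 + k) * (n + k) := by
      apply Nat.mul_div_cancel'
      have := two_dvd_mul_succ (n + k)
      convert this using 1; ring
    rw [h1, Nat.mul_add 2, h2]
    ring
  -- summability of f
  have hsum : Summable f := by
    apply summable_of_ratio_norm_eventually_le (r := 1/2) (by norm_num)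
    have hε : (0:ℝ) < (1 - q) / (2 * z) := by positivity
    obtain ⟨N, hN⟩ := exists_pow_lt_of_lt_one hε hq1
    rw [eventually_atTop]
    refine ⟨N, fun k hk => ?_⟩
    have hfact : f (k + 1) = f k * (q ^ (n + 1 + k) * z / (1 - q ^ (n + 2 + k))) := by
      have hPk1 := qPoch_pos hq0 hq1 (n + 1 + k)
      have hPk2 := qPoch_pos hq0 hq1 (n + 2 + k)
      have hps : qPoch q (n + 1 + (k + 1)) = qPoch q (n + 1 + k) * (1 - q ^ (n + 2 + k)) := by
        rw [show n + 1 + (k + 1) = (n + 1 + k) + 1 by omega, qPoch_succ,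
          show n + 1 + k + 1 = n + 2 + k by omega]
      have hq2 : q ^ (n + 2 + k) < 1 := pow_lt_one₀ hq0.le hq1 (by omega)
      simp only [hf_def]
      rw [hps, hexp_succ k, pow_add]
      have hzp : z ^ (n + 1 + (k + 1)) = z ^ (n + 1 + k) * z := by
        rw [show n + 1 + (k + 1) = (n + 1 + k) + 1 by omega, pow_succ]
      rw [hzp]
      field_simp
    have hub : q ^ (n + 1 + k) * z / (1 - q ^ (n + 2 + k)) ≤ 1 / 2 := by
      have h1 : q ^ (n + 1 + k) ≤ q ^ N :=
        pow_le_pow_of_le_one hq0.le hq1.le (show N ≤ n + 1 + k by omega)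
      have h2 : q ^ (n + 1 + k) * z ≤ (1 - q) / 2 := by
        have := mul_le_mul_of_nonneg_right (h1.trans hN.le) hz.le
        calc q ^ (n + 1 + k) * z ≤ (1 - q) / (2 * z) * z := this
          _ = (1 - q) / 2 := by field_simp
      have h3 : 1 - q ≤ 1 - q ^ (n + 2 + k) := by
        have : q ^ (n + 2 + k) ≤ q ^ 1 := pow_le_pow_of_le_one hq0.le hq1.le (by omega)
        simp at this; linarith
      rw [div_le_iff₀ (by linarith)]
      nlinarith [pow_pos hq0 (n + 1 + k)]
    rw [Real.norm_eq_abs, Real.norm_eq_abs, abs_of_pos (hfpos (k + 1)),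
      abs_of_pos (hfpos k), hfact]
    calc f k * (q ^ (n + 1 + k) * z / (1 - q ^ (n + 2 + k)))
        ≤ f k * (1 / 2) := mul_le_mul_of_nonneg_left hub (hfpos k).le
      _ = 1 / 2 * f k := by ring
  -- abbreviations
  set A := q ^ (n * (n + 1) / 2) * z ^ (n + 1) / qPoch q (n + 1) with hA_def
  set B := q ^ (n * (n - 1) / 2) * z ^ n / qPoch q n with hB_def
  -- the term of the right-hand side series
  set g : ℕ → ℝ := fun k => q ^ ((n * (n + 1) + (n + k) * (n + k + 1)) / 2) * (1 - q ^ (k + 1)) /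
      (qPoch q (n + 1) * qPoch q (n + k + 2)) * z ^ (2 * n + 2 + k) with hg_def
  -- f 0 * B equals the correction term
  have hC : f 0 * B = q ^ (n ^ 2) * z ^ (2 * n + 1) / (qPoch q n * qPoch q (n + 1)) := by
    simp only [hf_def, hB_def, Nat.add_zero]
    have he : (n + 1) * n / 2 + n * (n - 1) / 2 = n ^ 2 := by
      refine Nat.eq_of_mul_eq_mul_left (show 0 < 2 by norm_num) ?_
      rw [Nat.mul_add 2]
      have h1 : 2 * ((n + 1) * n / 2) = (n + 1) * n := by
        apply Nat.mul_div_cancel'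
        have := two_dvd_mul_succ n
        convert this using 1; ring
      have h2 : 2 * (n * (n - 1) / 2) = n * (n - 1) := Nat.mul_div_cancel' (two_dvd_mul_pred n)
      rw [h1, h2]
      cases n with
      | zero => simp
      | succ m => simp only [Nat.succ_sub_one]; ring
    field_simp
    rw [show q ^ ((n + 1) * n / 2) * z ^ (n + 1) * q ^ (n * (n - 1) / 2) * z ^ n
        = q ^ ((n + 1) * n / 2 + n * (n - 1) / 2) * z ^ (n + 1 + n) by rw [pow_add, pow_add]; ring,
      he, show n + 1 + n = 2 * n + 1 by omega]
  -- key per-term identity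
  have key : ∀ k : ℕ, f k * A - f (k + 1) * B = g k := by
    intro k
    simp only [hf_def, hA_def, hB_def, hg_def]
    have hPk1 := qPoch_pos hq0 hq1 (n + 1 + k)
    have hPk2 := qPoch_pos hq0 hq1 (n + k + 2)
    set E : ℕ := (n * (n + 1) + (n + k) * (n + k + 1)) / 2 with hE_def
    have hE1 : (n + 1 + k) * (n + k) / 2 + n * (n + 1) / 2 = E := by
      refine Nat.eq_of_mul_eq_mul_left (show 0 < 2 by norm_num) ?_
      rw [Nat.mul_add 2]
      have h1 : 2 * ((n + 1 + k) * (n + k) / 2) = (n + 1 + k) * (n + k) := by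
        apply Nat.mul_div_cancel'
        have := two_dvd_mul_succ (n + k); convert this using 1; ring
      have h2 : 2 * (n * (n + 1) / 2) = n * (n + 1) := Nat.mul_div_cancel' (two_dvd_mul_succ n)
      have h3 : 2 * E = n * (n + 1) + (n + k) * (n + k + 1) := by
        apply Nat.mul_div_cancel'
        exact dvd_add (two_dvd_mul_succ n) (two_dvd_mul_succ (n + k))
      rw [h1, h2, h3]; ring
    have hE2 : (n + 1 + (k + 1)) * (n + (k + 1)) / 2 + n * (n - 1) / 2 = E + (k + 1) := by
      refine Nat.eq_of_mul_eq_mul_left (show 0 < 2 by norm_num) ?_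
      rw [Nat.mul_add, Nat.mul_add 2]
      have h1 : 2 * ((n + 1 + (k + 1)) * (n + (k + 1)) / 2)
          = (n + 1 + (k + 1)) * (n + (k + 1)) := by
        apply Nat.mul_div_cancel'
        have := two_dvd_mul_succ (n + k + 1); convert this using 1; ring
      have h2 : 2 * (n * (n - 1) / 2) = n * (n - 1) := Nat.mul_div_cancel' (two_dvd_mul_pred n)
      have h3 : 2 * E = n * (n + 1) + (n + k) * (n + k + 1) := by
        apply Nat.mul_div_cancel'
        exact dvd_add (two_dvd_mul_succ n) (two_dvd_mul_succ (n + k))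
      rw [h1, h2, h3]
      cases n with
      | zero => simp; ring
      | succ m => simp only [Nat.succ_sub_one]; ring
    have hps1 : qPoch q (n + 1) = qPoch q n * (1 - q ^ (n + 1)) := qPoch_succ q n
    have hps2 : qPoch q (n + k + 2) = qPoch q (n + 1 + k) * (1 - q ^ (n + k + 2)) := by
      have := qPoch_succ q (n + k + 1)
      convert this using 3 <;> omega
    have hq1n : (0:ℝ) < 1 - q ^ (n + 1) := by
      have := pow_lt_one₀ hq0.le hq1 (show n + 1 ≠ 0 by omega); linarith
    have hq2n : (0:ℝ) < 1 - q ^ (n + k + 2) := by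
      have := pow_lt_one₀ hq0.le hq1 (show n + k + 2 ≠ 0 by omega); linarith
    have hP12 : qPoch q (n + 1 + (k + 1)) = qPoch q (n + 1 + k) * (1 - q ^ (n + k + 2)) := by
      rw [← hps2]; congr 1; omega
    rw [hP12, hps1, hps2]
    -- rewrite powers of q
    have hqa : q ^ ((n + 1 + k) * (n + k) / 2) * q ^ (n * (n + 1) / 2) = q ^ E := by
      rw [← pow_add, hE1]
    have hqb : q ^ ((n + 1 + (k + 1)) * (n + (k + 1)) / 2) * q ^ (n * (n - 1) / 2)
        = q ^ E * q ^ (k + 1) := by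
      rw [← pow_add, ← pow_add, hE2]
    have hza : z ^ (n + 1 + k) * z ^ (n + 1) = z ^ (2 * n + 2 + k) := by
      rw [← pow_add]; congr 1; omega
    have hzb : z ^ (n + 1 + (k + 1)) * z ^ n = z ^ (2 * n + 2 + k) := by
      rw [← pow_add]; congr 1; omega
    rw [div_mul_div_comm, div_mul_div_comm]
    rw [show q ^ ((n + 1 + (k + 1)) * (n + (k + 1)) / 2) * z ^ (n + 1 + (k + 1)) *
        (q ^ (n * (n - 1) / 2) * z ^ n)
        = (q ^ E * q ^ (k + 1)) * (z ^ (n + 1 + (k + 1)) * z ^ n) from by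
      rw [← hqb]; ring]
    rw [show q ^ ((n + 1 + k) * (n + k) / 2) * z ^ (n + 1 + k) *
        (q ^ (n * (n + 1) / 2) * z ^ (n + 1))
        = q ^ E * (z ^ (n + 1 + k) * z ^ (n + 1)) from by rw [← hqa]; ring]
    rw [hza, hzb]
    rw [show q ^ (n + k + 2) = q ^ (k + 1) * q ^ (n + 1) by rw [← pow_add]; congr 1; omega]
    have hx : (1:ℝ) - q ^ (k + 1) * q ^ (n + 1) ≠ 0 := by
      rw [← pow_add, show k + 1 + (n + 1) = n + k + 2 by omega]; exact hq2n.ne'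
    field_simp [hPk1.ne', hPn.ne', hq1n.ne', hx]
    have hx' : (1:ℝ) - q ^ (n + 1) * q ^ (k + 1) ≠ 0 := by rwa [mul_comm] at hx
    rw [eq_div_iff hx', sub_mul, div_mul_cancel₀ _ hx']
    ring
  -- assemble
  rw [hJ]
  have hsA : Summable fun k => f k * A := hsum.mul_right A
  have hsB : Summable fun k => f k * B := hsum.mul_right B
  have hsB' : Summable fun k => f (k + 1) * B := by
    have : Summable fun k => f (k + 1) := (summable_nat_add_iff 1).mpr hsum
    exact this.mul_right B
  calc (∑' k, f k) * (A - B) + q ^ (n ^ 2) * z ^ (2 * n + 1) / (qPoch q n * qPoch q (n + 1))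
      = (∑' k, (f k * A - f k * B)) + f 0 * B := by
        rw [← tsum_mul_right, ← hC]
        congr 1
        exact tsum_congr fun k => by ring
    _ = ((∑' k, f k * A) - (∑' k, f k * B)) + f 0 * B := by
        rw [Summable.tsum_sub hsA hsB]
    _ = ((∑' k, f k * A) - (f 0 * B + ∑' k, f (k + 1) * B)) + f 0 * B := by
        rw [← Summable.tsum_eq_zero_add hsB]
    _ = (∑' k, f k * A) - (∑' k, f (k + 1) * B) := by ring
    _ = ∑' k, (f k * A - f (k + 1) * B) := (Summable.tsum_sub hsA hsB').symm
    _ = ∑' k, g k := tsum_congr key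
end
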